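/- arXiv:0712.4213 — 4 statements merged into one kernel-verified Lean document; each statement's English description precedes it below -/
import Mathlib

section
/- Let k ≥ 2 be an even integer, ψ a real number, and t an integer, and let M = U_k(ψ,t). Then the state obtained by applying M to each qubit of the k-qubit cat state is inconsistent; equivalently, M_{0,0}^k + M_{0,1}^k = 0 and M_{1,0}^k + M_{1,1}^k = 0, so the amplitude a(y) = (1/√2)(∏_{i=1}^k M_{y_i,0} + ∏_{i=1}^k M_{y_i,1}) vanishes whenever y ∈ {0,1}^k is a constant string. -/
open Matrix

/-- The 2×2 complex matrix `U_k(ψ,t)` from the paper: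
`(1/√2)·[[e^{iψ}, e^{i(ψ−((2t+1)/k)π)}], [−e^{−i(ψ−((2t+1)/k)π)}, e^{−iψ}]]`. -/
noncomputable def Umat (k : ℤ) (ψ : ℝ) (t : ℤ) : Matrix (Fin 2) (Fin 2) ℂ :=
  (1 / (Real.sqrt 2 : ℂ)) •
    !![Complex.exp (Complex.I * (ψ : ℂ)),
        Complex.exp (Complex.I * ((ψ : ℂ) - ((2 * t + 1 : ℤ) : ℂ) / (k : ℂ) * (Real.pi : ℂ)));
      -Complex.exp (-(Complex.I * ((ψ : ℂ) - ((2 * t + 1 : ℤ) : ℂ) / (k : ℂ) * (Real.pi : ℂ)))),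
        Complex.exp (-(Complex.I * (ψ : ℂ)))]

/-- For an even integer `k ≥ 2`, a real `ψ`, and an integer `t`, applying `M = U_k(ψ,t)`
to each qubit of the `k`-qubit cat state yields an inconsistent state:
`M₀₀^k + M₀₁^k = 0` and `M₁₀^k + M₁₁^k = 0`, so the amplitude
`a(y) = (1/√2)(∏ᵢ M_{yᵢ,0} + ∏ᵢ M_{yᵢ,1})` vanishes on every constant string `y ∈ {0,1}^k`. -/
theorem Umat_cat_inconsistent (k : ℕ) (hk : 2 ≤ k) (hke : Even k) (ψ : ℝ) (t : ℤ) :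
    (∀ c : Fin 2, (Umat (k : ℤ) ψ t) c 0 ^ k + (Umat (k : ℤ) ψ t) c 1 ^ k = 0) ∧
      ∀ y : Fin k → Fin 2, (∃ c : Fin 2, ∀ i, y i = c) →
        (1 / (Real.sqrt 2 : ℂ)) *
            ((∏ i, (Umat (k : ℤ) ψ t) (y i) 0) + ∏ i, (Umat (k : ℤ) ψ t) (y i) 1) = 0 := by
  have hk0 : (k : ℂ) ≠ 0 := Nat.cast_ne_zero.mpr (by omega)
  set θ : ℂ := ((2 * t + 1 : ℤ) : ℂ) / ((k : ℤ) : ℂ) * (Real.pi : ℂ) with hθ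
  set s : ℂ := 1 / (Real.sqrt 2 : ℂ) with hs
  have key : Complex.exp (Complex.I * θ) ^ k = -1 := by
    rw [← Complex.exp_nat_mul]
    have h1 : (k : ℂ) * (Complex.I * θ) = ((2 * t + 1 : ℤ) : ℂ) * (Real.pi * Complex.I) := by
      rw [hθ]; push_cast; field_simp
    rw [h1, Complex.exp_int_mul, Complex.exp_pi_mul_I]
    exact Odd.neg_one_zpow ⟨t, by ring⟩
  have e00 : (Umat (k : ℤ) ψ t) 0 0 = s * Complex.exp (Complex.I * (ψ : ℂ)) := by
    simp [Umat, hs]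
  have e01 : (Umat (k : ℤ) ψ t) 0 1 = s * Complex.exp (Complex.I * ((ψ : ℂ) - θ)) := by
    simp [Umat, hs, hθ]
  have e10 : (Umat (k : ℤ) ψ t) 1 0 = -(s * Complex.exp (-(Complex.I * ((ψ : ℂ) - θ)))) := by
    simp [Umat, hs, hθ]
  have e11 : (Umat (k : ℤ) ψ t) 1 1 = s * Complex.exp (-(Complex.I * (ψ : ℂ))) := by
    simp [Umat, hs]
  have main : ∀ c : Fin 2, (Umat (k : ℤ) ψ t) c 0 ^ k + (Umat (k : ℤ) ψ t) c 1 ^ k = 0 := by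
    intro c
    fin_cases c
    · show (Umat (k : ℤ) ψ t) 0 0 ^ k + (Umat (k : ℤ) ψ t) 0 1 ^ k = 0
      have h2 : Complex.I * ((ψ : ℂ) - θ) = Complex.I * (ψ : ℂ) - Complex.I * θ := by ring
      rw [e00, e01, h2, Complex.exp_sub, mul_pow, mul_pow, div_pow, div_pow, key]
      ring
    · show (Umat (k : ℤ) ψ t) 1 0 ^ k + (Umat (k : ℤ) ψ t) 1 1 ^ k = 0
      have h2 : -(Complex.I * ((ψ : ℂ) - θ)) = -(Complex.I * (ψ : ℂ)) + Complex.I * θ := by ring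
      rw [e10, e11, h2, Complex.exp_add, neg_pow, mul_pow, mul_pow, key, hke.neg_one_pow]
      ring
  refine ⟨main, ?_⟩
  rintro y ⟨c, hc⟩
  have h0 : ∏ i, (Umat (k : ℤ) ψ t) (y i) 0 = (Umat (k : ℤ) ψ t) c 0 ^ k := by
    simp [hc, Finset.prod_const]
  have h1 : ∏ i, (Umat (k : ℤ) ψ t) (y i) 1 = (Umat (k : ℤ) ψ t) c 1 ^ k := by
    simp [hc, Finset.prod_const]
  rw [h0, h1, main c, mul_zero]
end

section
/- For every integer k ≥ 2 there exists a unitary 4×4 complex matrix V (a two-qubit local operation, depending on k) such that V_{c,0}^k + V_{c,2}^k = 0 for every c ∈ {0,1,2,3}; consequently, applying V at each of k sites to the 2k-qubit state (|00⟩^{⊗k}+|10⟩^{⊗k})/√2 (the k-qubit cat state on the first qubits together with a fresh |0⟩ ancilla at each site) yields an inconsistent state. -/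
open Matrix

private lemma helperU (w x : EuclideanSpace ℂ (Fin 4))
    (hww : inner (𝕜 := ℂ) w w = 1) (hxx : inner (𝕜 := ℂ) x x = 1)
    (hwx : inner (𝕜 := ℂ) w x = 0) :
    ∃ V : Matrix (Fin 4) (Fin 4) ℂ,
      (V * Vᴴ = 1 ∧ Vᴴ * V = 1) ∧ (∀ c, V c 0 = w c) ∧ (∀ c, V c 2 = x c) := by
  classical
  set v : Fin 4 → EuclideanSpace ℂ (Fin 4) := fun i => if i = 0 then w else x with hv
  have hcard : Module.finrank ℂ (EuclideanSpace ℂ (Fin 4)) = Fintype.card (Fin 4) := by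
    simp
  have horth : Orthonormal ℂ (({0, 2} : Set (Fin 4)).restrict v) := by
    rw [orthonormal_iff_ite]
    rintro ⟨i, hi⟩ ⟨j, hj⟩
    simp only [Set.mem_insert_iff, Set.mem_singleton_iff] at hi hj
    have hxw : inner (𝕜 := ℂ) x w = 0 := by
      rw [← inner_conj_symm, hwx, map_zero]
    have hw1 : ‖w‖ = 1 := (pow_eq_one_iff_of_nonneg (norm_nonneg w) two_ne_zero).mp
      (RCLike.ofReal_injective (K := ℂ) (by
        rw [RCLike.ofReal_pow, RCLike.ofReal_one]
        exact (inner_self_eq_norm_sq_to_K (𝕜 := ℂ) w).symm.trans hww))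
    have hx1 : ‖x‖ = 1 := (pow_eq_one_iff_of_nonneg (norm_nonneg x) two_ne_zero).mp
      (RCLike.ofReal_injective (K := ℂ) (by
        rw [RCLike.ofReal_pow, RCLike.ofReal_one]
        exact (inner_self_eq_norm_sq_to_K (𝕜 := ℂ) x).symm.trans hxx))
    rcases hi with rfl | rfl <;> rcases hj with rfl | rfl <;>
      simp [v, hww, hxx, hwx, hxw, hw1, hx1, Set.restrict, Subtype.mk_eq_mk]
  obtain ⟨b, hb⟩ := horth.exists_orthonormalBasis_extension_of_card_eq hcard
  have hVV : (Matrix.of fun c j => b j c)ᴴ * (Matrix.of fun c j => b j c) = 1 := by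
    ext i j
    have h := (orthonormal_iff_ite.mp b.orthonormal) i j
    rw [PiLp.inner_apply] at h
    simp only [RCLike.inner_apply, starRingEnd_apply] at h
    simp only [Matrix.mul_apply, Matrix.conjTranspose_apply, Matrix.of_apply, Matrix.one_apply]
    exact (Finset.sum_congr rfl fun _ _ => mul_comm _ _).trans h
  refine ⟨Matrix.of fun c j => b j c, ⟨mul_eq_one_comm.mpr hVV, hVV⟩, ?_, ?_⟩
  · intro c; simp [hb 0 (by simp), v]
  · intro c; simp [hb 2 (by simp), v]

/-- For every integer `k ≥ 2` there exists a unitary 4×4 complex matrix `V` (a two-qubit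
local operation, depending on `k`, with rows/columns indexed by two-bit strings
`00,01,10,11` encoded as `0,1,2,3`) such that `V_{c,00}^k + V_{c,10}^k = 0` for every
two-bit string `c`; consequently, applying `V` at each of `k` sites to the `2k`-qubit state
`(|00⟩^{⊗k}+|10⟩^{⊗k})/√2` yields an inconsistent state, i.e., the amplitude
`(1/√2)(∏ᵢ V_{yᵢ,00} + ∏ᵢ V_{yᵢ,10})` vanishes on every constant string `y`. -/
theorem exists_local_unitary_breaking_cat (k : ℕ) (hk : 2 ≤ k) :
    ∃ V : Matrix (Fin 4) (Fin 4) ℂ,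
      (V * Vᴴ = 1 ∧ Vᴴ * V = 1) ∧
      (∀ c : Fin 4, V c 0 ^ k + V c 2 ^ k = 0) ∧
      ∀ y : Fin k → Fin 4, (∃ c : Fin 4, ∀ i, y i = c) →
        (1 / (Real.sqrt 2 : ℂ)) * ((∏ i, V (y i) 0) + ∏ i, V (y i) 2) = 0 := by
  have hk0 : (k:ℂ) ≠ 0 := Nat.cast_ne_zero.mpr (by omega)
  set z : ℂ := ((Real.pi / k : ℝ) : ℂ) * Complex.I with hz
  set ζ := Complex.exp z with hζ
  have hζk : ζ ^ k = -1 := by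
    rw [hζ, ← Complex.exp_nat_mul]
    have h1 : (k:ℂ) * z = Real.pi * Complex.I := by
      rw [hz]; push_cast; field_simp
    rw [h1, Complex.exp_pi_mul_I]
  have hconj : (starRingEnd ℂ) ζ = Complex.exp (-z) := by
    rw [hζ, ← Complex.exp_conj]; congr 1; simp [hz]
  have huv : ζ * (starRingEnd ℂ) ζ = 1 := by
    rw [hconj, hζ, ← Complex.exp_add]; simp
  have hvk : ((starRingEnd ℂ) ζ) ^ k = -1 := by rw [← map_pow, hζk]; simp
  -- it suffices to find two orthonormal columns with the power property
  suffices h : ∃ w x : EuclideanSpace ℂ (Fin 4),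
      inner (𝕜 := ℂ) w w = 1 ∧ inner (𝕜 := ℂ) x x = 1 ∧ inner (𝕜 := ℂ) w x = 0 ∧
      ∀ c : Fin 4, w c ^ k + x c ^ k = 0 by
    obtain ⟨w, x, hww, hxx, hwx, hpow⟩ := h
    obtain ⟨V, hU, h0, h2⟩ := helperU w x hww hxx hwx
    have hpow' : ∀ c : Fin 4, V c 0 ^ k + V c 2 ^ k = 0 := by
      intro c; rw [h0 c, h2 c]; exact hpow c
    refine ⟨V, hU, hpow', ?_⟩
    rintro y ⟨c, hc⟩
    have hp : ∀ j : Fin 4, ∏ i, V (y i) j = V c j ^ k := by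
      intro j
      rw [Finset.prod_congr rfl (fun i _ => by rw [hc i]), Finset.prod_const,
        Finset.card_univ, Fintype.card_fin]
    rw [hp, hp, hpow' c, mul_zero]
  rcases Nat.even_or_odd k with hke | hko
  · -- even case
    refine ⟨(WithLp.equiv 2 (Fin 4 → ℂ)).symm ![1/2, 1/2, 1/2, 1/2],
      (WithLp.equiv 2 (Fin 4 → ℂ)).symm
        ![ζ/2, (starRingEnd ℂ) ζ/2, -((starRingEnd ℂ) ζ)/2, -ζ/2], ?_, ?_, ?_, ?_⟩
    · rw [PiLp.inner_apply]
      simp only [RCLike.inner_apply, Fin.sum_univ_four, WithLp.equiv_symm_apply, WithLp.ofLp_toLp,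
        Matrix.cons_val_zero, Matrix.cons_val_one, Matrix.head_cons, Matrix.cons_val_two,
        Matrix.tail_cons, Matrix.cons_val_three, map_div₀, _root_.map_one, map_ofNat]
      norm_num
    · rw [PiLp.inner_apply]
      simp only [RCLike.inner_apply, Fin.sum_univ_four, WithLp.equiv_symm_apply, WithLp.ofLp_toLp,
        Matrix.cons_val_zero, Matrix.cons_val_one, Matrix.head_cons, Matrix.cons_val_two,
        Matrix.tail_cons, Matrix.cons_val_three, map_div₀, map_neg, map_ofNat,
        Complex.conj_conj]
      linear_combination huv
    · rw [PiLp.inner_apply]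
      simp only [RCLike.inner_apply, Fin.sum_univ_four, WithLp.equiv_symm_apply, WithLp.ofLp_toLp,
        Matrix.cons_val_zero, Matrix.cons_val_one, Matrix.head_cons, Matrix.cons_val_two,
        Matrix.tail_cons, Matrix.cons_val_three, map_div₀, _root_.map_one, map_ofNat]
      ring
    · intro c
      fin_cases c
      · show (1/2:ℂ)^k + (ζ/2)^k = 0
        rw [div_pow, div_pow, hζk, one_pow]; ring
      · show (1/2:ℂ)^k + ((starRingEnd ℂ) ζ/2)^k = 0
        rw [div_pow, div_pow, hvk, one_pow]; ring
      · show (1/2:ℂ)^k + (-((starRingEnd ℂ) ζ)/2)^k = 0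
        rw [div_pow, div_pow, hke.neg_pow, hvk, one_pow]; ring
      · show (1/2:ℂ)^k + (-ζ/2)^k = 0
        rw [div_pow, div_pow, hke.neg_pow, hζk, one_pow]; ring
  · -- odd case
    have hk3 : (2:ℝ) < k := by
      have : 3 ≤ k := by
        rcases hko with ⟨m, hm⟩; omega
      exact_mod_cast by omega
    set cr := Real.cos (Real.pi / k) with hcr
    have hsum : ζ + (starRingEnd ℂ) ζ = 2 * (cr : ℂ) := by
      rw [Complex.add_conj]
      norm_cast
      rw [hζ, hz, Complex.exp_ofReal_mul_I_re, hcr]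
    have hcrpos : 0 < cr := by
      apply Real.cos_pos_of_mem_Ioo
      have hkR : (0:ℝ) < k := by linarith
      have h1 : (0:ℝ) < Real.pi / k := div_pos Real.pi_pos hkR
      constructor
      · linarith [Real.pi_pos]
      · exact div_lt_div_of_pos_left Real.pi_pos two_pos hk3
    have hd : (0:ℝ) < 2 + 2*cr := by linarith
    set a := Real.sqrt (1/(2+2*cr)) with hadef
    set bb := Real.sqrt (cr/(2+2*cr)) with hbdef
    have ha2 : a^2 = 1/(2+2*cr) := Real.sq_sqrt (by positivity)
    have hb2 : bb^2 = cr/(2+2*cr) := Real.sq_sqrt (by positivity)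
    have hreal1 : 2*a^2 + 2*bb^2 = 1 := by rw [ha2, hb2]; field_simp
    have hreal2 : a^2*cr = bb^2 := by rw [ha2, hb2]; ring
    have hC1 : 2*(a:ℂ)^2 + 2*(bb:ℂ)^2 = 1 := by exact_mod_cast hreal1
    have hC2 : (a:ℂ)^2*(cr:ℂ) = (bb:ℂ)^2 := by exact_mod_cast hreal2
    refine ⟨(WithLp.equiv 2 (Fin 4 → ℂ)).symm ![(a:ℂ), (a:ℂ), (bb:ℂ), (bb:ℂ)],
      (WithLp.equiv 2 (Fin 4 → ℂ)).symm
        ![ζ*(a:ℂ), (starRingEnd ℂ) ζ*(a:ℂ), -(bb:ℂ), -(bb:ℂ)], ?_, ?_, ?_, ?_⟩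
    · rw [PiLp.inner_apply]
      simp only [RCLike.inner_apply, Fin.sum_univ_four, WithLp.equiv_symm_apply, WithLp.ofLp_toLp,
        Matrix.cons_val_zero, Matrix.cons_val_one, Matrix.head_cons, Matrix.cons_val_two,
        Matrix.tail_cons, Matrix.cons_val_three, Complex.conj_ofReal]
      linear_combination hC1
    · rw [PiLp.inner_apply]
      simp only [RCLike.inner_apply, Fin.sum_univ_four, WithLp.equiv_symm_apply, WithLp.ofLp_toLp,
        Matrix.cons_val_zero, Matrix.cons_val_one, Matrix.head_cons, Matrix.cons_val_two,
        Matrix.tail_cons, Matrix.cons_val_three, _root_.map_mul, map_neg, Complex.conj_ofReal,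
        Complex.conj_conj]
      linear_combination 2*(a:ℂ)^2*huv + hC1
    · rw [PiLp.inner_apply]
      simp only [RCLike.inner_apply, Fin.sum_univ_four, WithLp.equiv_symm_apply, WithLp.ofLp_toLp,
        Matrix.cons_val_zero, Matrix.cons_val_one, Matrix.head_cons, Matrix.cons_val_two,
        Matrix.tail_cons, Matrix.cons_val_three, Complex.conj_ofReal]
      linear_combination (a:ℂ)^2*hsum + 2*hC2
    · intro c
      fin_cases c
      · show ((a:ℂ))^k + (ζ*(a:ℂ))^k = 0
        rw [mul_pow, hζk]; ring
      · show ((a:ℂ))^k + ((starRingEnd ℂ) ζ*(a:ℂ))^k = 0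
        rw [mul_pow, hvk]; ring
      · show ((bb:ℂ))^k + (-(bb:ℂ))^k = 0
        rw [hko.neg_pow]; ring
      · show ((bb:ℂ))^k + (-(bb:ℂ))^k = 0
        rw [hko.neg_pow]; ring
end

section
/- Let n ≥ 1, let S be a nonempty subset of {1,…,n} with |S| = k, and let x ∈ {0,1}^n be constant on S. Consider the n-qubit state Ψ = (|x⟩+|x̄⟩)/√2, whose amplitude on w ∈ {0,1}^n is (1/√2)([w = x] + [w = x̄]). For an outcome assignment r : ({1,…,n}\S) → {+,−}, define the unnormalized post-measurement state φ_r on the qubits in S by φ_r(w) = ∑_{z ∈ {0,1}^{S^c}} Ψ(w ⊔ z) · ∏_{j∉S} h(r_j, z_j), where w ⊔ z denotes the n-bit string agreeing with w on S and with z on the complement, and h(+,0) = h(+,1) = h(−,0) = 1/√2, h(−,1) = −1/√2. Let p = |{ j ∉ S : r_j = − }|. Then there is a nonzero complex scalar c (with |c| = (1/√2)^{n−k+1}) such that φ_r(w) = c·([w = 0^S] + (−1)^p·[w = 1^S]); that is, after all parties outside S measure their qubits in the Hadamard basis, the k parties in S share (|0⟩^{⊗k}+|1⟩^{⊗k})/√2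 if p is even and (|0⟩^{⊗k}−|1⟩^{⊗k})/√2 if p is odd, up to global phase. -/
open Finset

private lemma sgn_mul_self {J : Type*} [Fintype J] (f : J → Bool) :
    (∏ j : J, (if f j then (-1 : ℂ) else 1)) *
      (∏ j : J, (if f j then (-1 : ℂ) else 1)) = 1 := by
  rw [← Finset.prod_mul_distrib]
  apply Finset.prod_eq_one
  intro j _
  by_cases h : f j <;> simp [h]

private lemma sgn_abs {J : Type*} [Fintype J] (f : J → Bool) :
    ‖∏ j : J, (if f j then (-1 : ℂ) else 1)‖ = 1 := by
  rw [norm_prod]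
  apply Finset.prod_eq_one
  intro j _
  by_cases h : f j <;> simp [h]

private lemma prod_sign_split {J : Type*} [Fintype J] (f : J → Bool) (c : ℂ) :
    (∏ j : J, (if f j then -c else c)) =
      (∏ j : J, (if f j then (-1 : ℂ) else 1)) * c ^ Fintype.card J := by
  have h : ∀ j : J, (if f j then -c else c) = (if f j then (-1 : ℂ) else 1) * c := by
    intro j; by_cases h : f j <;> simp [h]
  simp_rw [h]
  rw [Finset.prod_mul_distrib, Finset.prod_const, Finset.card_univ]


/-- Hadamard measurement of all qubits outside `S` on the cat-like state
`(|x⟩+|x̄⟩)/√2` (with `x` constant on `S`) leaves the parties in `S` sharing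
`(|0⟩^{⊗k}+|1⟩^{⊗k})/√2` or `(|0⟩^{⊗k}−|1⟩^{⊗k})/√2` up to a global phase,
according to the parity `p` of the number of `−` outcomes. -/
theorem hadamard_measurement_cat (n : ℕ) (hn : 1 ≤ n) (S : Finset (Fin n))
    (hS : S.Nonempty) (k : ℕ) (hk : S.card = k) (x : Fin n → Bool)
    (hx : ∀ i ∈ S, ∀ j ∈ S, x i = x j)
    (r : {j : Fin n // j ∉ S} → Bool) (p : ℕ)
    (hp : p = (Finset.univ.filter fun j : {j : Fin n // j ∉ S} => r j = true).card) :
    ∃ c : ℂ, c ≠ 0 ∧ ‖c‖ = (1 / Real.sqrt 2) ^ (n - k + 1) ∧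
      ∀ w : {i : Fin n // i ∈ S} → Bool,
        (∑ z : {j : Fin n // j ∉ S} → Bool,
            ((1 / (Real.sqrt 2 : ℂ)) *
                ((if (fun i : Fin n => if h : i ∈ S then w ⟨i, h⟩ else z ⟨i, h⟩) = x
                    then 1 else 0) +
                  (if (fun i : Fin n => if h : i ∈ S then w ⟨i, h⟩ else z ⟨i, h⟩) =
                      fun i => !(x i) then 1 else 0))) *
              ∏ j : {j : Fin n // j ∉ S},
                (((if r j && z j then -(1 / Real.sqrt 2) else 1 / Real.sqrt 2 : ℝ)) : ℂ)) =
          c * ((if ∀ i, w i = false then 1 else 0) +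
                (-1 : ℂ) ^ p * (if ∀ i, w i = true then 1 else 0)) := by
  classical
  obtain ⟨i0, hi0⟩ := hS
  set c0 : ℂ := ((1 / Real.sqrt 2 : ℝ) : ℂ) with hc0
  have hs2 : Real.sqrt 2 ≠ 0 := by positivity
  have hc0ne : c0 ≠ 0 := by
    simp [hc0, hs2]
  set m : ℕ := n - k with hm
  have hcardJ : Fintype.card {j : Fin n // j ∉ S} = m := by
    rw [hm, ← hk]
    simp [Fintype.card_subtype_compl]
  set A : ℂ := ∏ j : {j : Fin n // j ∉ S}, (if r j && x j then (-1 : ℂ) else 1) with hA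
  set B : ℂ := ∏ j : {j : Fin n // j ∉ S}, (if r j && !(x j) then (-1 : ℂ) else 1) with hB
  have hAB : A * B = (-1 : ℂ) ^ p := by
    rw [hA, hB, ← Finset.prod_mul_distrib]
    have h1 : ∀ j : {j : Fin n // j ∉ S},
        (if r j && x j then (-1 : ℂ) else 1) * (if r j && !(x j) then (-1 : ℂ) else 1)
          = (if r j then (-1 : ℂ) else 1) := by
      intro j; cases hr : r j <;> cases hx' : x (j : Fin n) <;> simp [hr, hx']
    simp_rw [h1]
    rw [Finset.prod_ite, Finset.prod_const, Finset.prod_const, one_pow, mul_one, hp]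
  have hAA : A * A = 1 := sgn_mul_self _
  have hBB : B * B = 1 := sgn_mul_self _
  have hAne : A ≠ 0 := fun h => by simp [h] at hAA
  have hBne : B ≠ 0 := fun h => by simp [h] at hBB
  have habsA : ‖A‖ = 1 := sgn_abs (fun j : {j : Fin n // j ∉ S} => r j && x j.val)
  have habsB : ‖B‖ = 1 := sgn_abs (fun j : {j : Fin n // j ∉ S} => r j && !(x j.val))
  refine ⟨c0 ^ (m + 1) * (if x i0 then B else A), ?_, ?_, ?_⟩
  · apply mul_ne_zero (pow_ne_zero _ hc0ne)
    cases x i0 <;> simp [hAne, hBne]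
  · rw [norm_mul, norm_pow, hc0]
    have h1 : ‖((1 / Real.sqrt 2 : ℝ) : ℂ)‖ = 1 / Real.sqrt 2 := by
      rw [Complex.norm_real, Real.norm_eq_abs, abs_of_nonneg (by positivity)]
    rw [h1]
    have h2 : ‖(if x i0 then B else A)‖ = 1 := by
      cases x i0 <;> simp [habsA, habsB]
    rw [h2, mul_one, hm]
  intro w
  -- rewrite the per-factor casts
  have hcast : ∀ z : {j : Fin n // j ∉ S} → Bool, ∀ j : {j : Fin n // j ∉ S},
      (((if r j && z j then -(1 / Real.sqrt 2) else 1 / Real.sqrt 2 : ℝ)) : ℂ)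
        = (if r j && z j then -c0 else c0) := by
    intro z j
    by_cases h : (r j && z j : Bool) <;> simp [h, hc0]
  -- glue lemma
  have hglue : ∀ (z : {j : Fin n // j ∉ S} → Bool) (y : Fin n → Bool),
      ((fun i : Fin n => if h : i ∈ S then w ⟨i, h⟩ else z ⟨i, h⟩) = y) ↔
        (w = fun i => y i.val) ∧ (z = fun j => y j.val) := by
    intro z y
    constructor
    · intro h
      constructor
      · funext i
        have := congrFun h i.val
        simpa [i.prop] using this
      · funext j
        have := congrFun h j.val
        simpa [j.prop] using this
    · rintro ⟨h1, h2⟩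
      funext i
      by_cases hi : i ∈ S
      · simpa [hi] using congrFun h1 ⟨i, hi⟩
      · simpa [hi] using congrFun h2 ⟨i, hi⟩
  have hind : ∀ (z : {j : Fin n // j ∉ S} → Bool) (y : Fin n → Bool),
      (if (fun i : Fin n => if h : i ∈ S then w ⟨i, h⟩ else z ⟨i, h⟩) = y then (1:ℂ) else 0)
        = (if w = (fun i => y i.val) then (1:ℂ) else 0) *
          (if z = (fun j => y j.val) then (1:ℂ) else 0) := by
    intro z y
    simp only [hglue]
    by_cases h1 : w = (fun i : {i : Fin n // i ∈ S} => y i.val) <;>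
      by_cases h2 : z = (fun j : {j : Fin n // j ∉ S} => y j.val) <;>
      simp [h1, h2]
  set P : ({j : Fin n // j ∉ S} → Bool) → ℂ :=
    fun z => ∏ j : {j : Fin n // j ∉ S}, (if r j && z j then -c0 else c0) with hP
  have key : (∑ z : {j : Fin n // j ∉ S} → Bool,
      ((1 / (Real.sqrt 2 : ℂ)) *
          ((if (fun i : Fin n => if h : i ∈ S then w ⟨i, h⟩ else z ⟨i, h⟩) = x
              then 1 else 0) +
            (if (fun i : Fin n => if h : i ∈ S then w ⟨i, h⟩ else z ⟨i, h⟩) =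
                fun i => !(x i) then 1 else 0))) *
        ∏ j : {j : Fin n // j ∉ S},
          (((if r j && z j then -(1 / Real.sqrt 2) else 1 / Real.sqrt 2 : ℝ)) : ℂ))
      = c0 * ((if w = (fun i => x i.val) then (1:ℂ) else 0) * P (fun j => x j.val)
          + (if w = (fun i => !(x i.val)) then (1:ℂ) else 0) * P (fun j => !(x j.val))) := by
    have hc0' : (1 / (Real.sqrt 2 : ℂ)) = c0 := by
      rw [hc0]; push_cast; ring
    calc (∑ z : {j : Fin n // j ∉ S} → Bool, _)
        = ∑ z : {j : Fin n // j ∉ S} → Bool,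
            (c0 * ((if w = (fun i => x i.val) then (1:ℂ) else 0) *
                (if z = (fun j => x j.val) then P z else 0)
              + (if w = (fun i => !(x i.val)) then (1:ℂ) else 0) *
                (if z = (fun j => !(x j.val)) then P z else 0))) := by
          apply Finset.sum_congr rfl
          intro z _
          rw [hc0']
          simp only [hind z x, hind z (fun i => !(x i)), hP, hcast z]
          split_ifs <;> ring
      _ = c0 * ((if w = (fun i => x i.val) then (1:ℂ) else 0) * P (fun j => x j.val)
          + (if w = (fun i => !(x i.val)) then (1:ℂ) else 0) * P (fun j => !(x j.val))) := by
          rw [← Finset.mul_sum, Finset.sum_add_distrib, ← Finset.mul_sum, ← Finset.mul_sum,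
            Finset.sum_ite_eq' Finset.univ, Finset.sum_ite_eq' Finset.univ]
          simp
  rw [key]
  -- evaluate P at the two special points
  have hPx : P (fun j => x j.val) = A * c0 ^ m := by
    have h := prod_sign_split (fun j : {j : Fin n // j ∉ S} => r j && x j.val) c0
    rw [hcardJ] at h
    exact h
  have hPx' : P (fun j => !(x j.val)) = B * c0 ^ m := by
    have h := prod_sign_split (fun j : {j : Fin n // j ∉ S} => r j && !(x j.val)) c0
    rw [hcardJ] at h
    exact h
  rw [hPx, hPx']
  -- indicators in terms of b
  have hwx : (fun i : {i : Fin n // i ∈ S} => x i.val) = fun _ => x i0 := by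
    funext i; exact hx i.val i.prop i0 hi0
  have hwx' : (fun i : {i : Fin n // i ∈ S} => !(x i.val)) = fun _ => !(x i0) := by
    funext i; rw [hx i.val i.prop i0 hi0]
  rw [hwx, hwx']
  have hif : ∀ (v : Bool), (if w = (fun _ : {i : Fin n // i ∈ S} => v) then (1:ℂ) else 0)
      = (if ∀ i, w i = v then (1:ℂ) else 0) := by
    intro v
    congr 1
    simp [funext_iff]
  have hBeq : B = A * (-1 : ℂ) ^ p := by
    rw [← hAB, ← mul_assoc, hAA, one_mul]
  have hAeq : A = B * (-1 : ℂ) ^ p := by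
    rw [← hAB, mul_comm A B, ← mul_assoc, hBB, one_mul]
  cases hb : x i0
  · simp only [Bool.not_false, Bool.false_eq_true, if_false, hif]
    rw [hBeq]
    ring
  · simp only [Bool.not_true, if_true, hif]
    rw [hAeq]
    ring
end

section
/- Let A be a finite set with |A| = n ≥ 1, and let (r_k)_{k ≥ 0} be a sequence of equivalence relations on A such that (i) for every k, r_{k+1} refines r_k (i.e., whenever x and y are r_{k+1}-equivalent they are r_k-equivalent), and (ii) for every k ≥ 1, if r_{k−1} = r_k then r_k = r_{k+1}. Then r_j = r_{n−1} for every j ≥ n−1. (Consequently, in the setting of views of an n-party anonymous network — where r_k is the relation 'the depth-k views of the two parties are isomorphic' — two parties have isomorphic views of infinite depth if and only if their views of depth n−1 are isomorphic, which is Norris's theorem.) -/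
/-- Let `A` be a finite set with `|A| = n ≥ 1` and let `(r_k)` be a sequence of equivalence
relations on `A` such that each `r_{k+1}` refines `r_k`, and such that `r_{k−1} = r_k`
(for `k ≥ 1`) implies `r_k = r_{k+1}`. Then `r_j = r_{n−1}` for every `j ≥ n − 1`.
(This is the combinatorial core of Norris's theorem: two parties of an `n`-party anonymous
network have isomorphic views of infinite depth iff their views of depth `n − 1` are
isomorphic.) -/
theorem equiv_relation_sequence_stabilizes {A : Type*} [Fintype A]
    (n : ℕ) (hn : 1 ≤ n) (hcard : Fintype.card A = n)
    (r : ℕ → Setoid A)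
    (hrefine : ∀ k : ℕ, ∀ x y : A, (r (k + 1)).r x y → (r k).r x y)
    (hstep : ∀ k : ℕ, 1 ≤ k → r (k - 1) = r k → r k = r (k + 1)) :
    ∀ j : ℕ, n - 1 ≤ j → r j = r (n - 1) := by
  classical
  -- number of classes
  set f : ℕ → ℕ := fun k => Fintype.card (Quotient (r k)) with hf
  have hle : ∀ k, f k ≤ n := by
    intro k
    rw [← hcard]
    exact Fintype.card_quotient_le _
  have hpos : ∀ k, 1 ≤ f k := by
    intro k
    have : Nonempty A := Fintype.card_pos_iff.mp (by omega)
    exact Fintype.card_pos_iff.mpr (Nonempty.map Quotient.mk'' this)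
  -- surjective map between quotients
  have hsurj : ∀ k, Function.Surjective
      (Quotient.map (sa := r (k+1)) (sb := r k) id (fun x y h => hrefine k x y h)) := by
    intro k q
    obtain ⟨a, rfl⟩ := Quotient.exists_rep q
    exact ⟨Quotient.mk _ a, rfl⟩
  have hmono : ∀ k, f k ≤ f (k + 1) := fun k =>
    Fintype.card_le_of_surjective _ (hsurj k)
  have hstrict : ∀ k, r k ≠ r (k + 1) → f k < f (k + 1) := by
    intro k hne
    rcases lt_or_eq_of_le (hmono k) with h | h
    · exact h
    · exfalso
      apply hne
      have hbij : Function.Bijective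
          (Quotient.map (sa := r (k+1)) (sb := r k) id (fun x y h => hrefine k x y h)) :=
        (Fintype.bijective_iff_surjective_and_card _).mpr ⟨hsurj k, h.symm⟩
      ext x y
      constructor
      · intro hxy
        have : (Quotient.mk (r k) x) = Quotient.mk (r k) y := Quotient.sound hxy
        have heq : (Quotient.mk (r (k+1)) x) = Quotient.mk (r (k+1)) y :=
          hbij.1 (by simpa [Quotient.map_mk] using this)
        exact Quotient.exact heq
      · exact hrefine k x y
  -- there is a stabilization point k ≤ n - 1
  have hstab : ∃ k, k ≤ n - 1 ∧ r k = r (k + 1) := by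
    by_contra hcon
    push_neg at hcon
    have hgrow : ∀ k, k ≤ n → k + 1 ≤ f k := by
      intro k hk
      induction k with
      | zero => exact hpos 0
      | succ m ih =>
        have hm : m ≤ n - 1 := by omega
        have := hstrict m (hcon m hm)
        have := ih (by omega)
        omega
    have := hgrow n le_rfl
    have := hle n
    omega
  obtain ⟨k₀, hk₀, hstabk⟩ := hstab
  -- all later relations equal r k₀
  have hall' : ∀ m : ℕ, r (k₀ + m) = r k₀ ∧ r (k₀ + m) = r (k₀ + m + 1) := by
    intro m
    induction m with
    | zero => exact ⟨rfl, hstabk⟩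
    | succ p ih =>
      obtain ⟨h1, h2⟩ := ih
      refine ⟨by rw [show k₀ + (p+1) = k₀ + p + 1 from rfl, ← h2, h1], ?_⟩
      have := hstep (k₀ + p + 1) (by omega) (by simpa using h2)
      simpa [Nat.add_assoc] using this
  have hall : ∀ m, k₀ ≤ m → r m = r k₀ := by
    intro m hm
    obtain ⟨d, rfl⟩ := Nat.exists_eq_add_of_le hm
    exact (hall' d).1
  intro j hj
  rw [hall j (by omega), (hall (n - 1) (by omega)).symm]
end
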